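/- Let ℓ be a prime, n ∣ ℓ-1 with n > 1, and χ a character of order n on (ℤ/ℓℤ)*. Then the n-th power of the Gauss sum, G_χ(ζ_ℓ)^n, lies in the ring ℤ[ζ_n]. -/
import Mathlib


/-- For a prime `ℓ`, `n ∣ ℓ-1` with `n > 1` and a character `χ` of exact order `n`,
the `n`-th power of the Gauss sum `G_χ(ζ_ℓ)` lies in `ℤ[ζ_n]`. -/
theorem gauss_sum_pow_mem
    (ℓ n : ℕ) [Fact (Nat.Prime ℓ)] (hn : n ∣ ℓ - 1) (hn1 : 1 < n)
    (ζ : ℂ) (hζ : IsPrimitiveRoot ζ ℓ)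
    (ζn : ℂ) (hζn : IsPrimitiveRoot ζn n)
    (χ : MulChar (ZMod ℓ) ℂ) (hord : orderOf χ = n) :
    (∑ lam : (ZMod ℓ)ˣ, χ lam * ζ ^ ((lam : ZMod ℓ).val)) ^ n ∈
      Algebra.adjoin ℤ ({ζn} : Set ℂ) := by
  haveI : NeZero n := ⟨by omega⟩
  have hζℓ : ζ ^ ℓ = 1 := hζ.pow_eq_one
  set ψ : AddChar (ZMod ℓ) ℂ := AddChar.zmodChar ℓ hζℓ with hψdef
  have hψ : ψ.IsPrimitive := by
    have := AddChar.zmodChar_primitive_of_primitive_root ℓ hζ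
    convert this using 2
  have hχn : χ ^ n = 1 := hord ▸ pow_orderOf_eq_one χ
  have hsum : (∑ lam : (ZMod ℓ)ˣ, χ lam * ζ ^ ((lam : ZMod ℓ).val)) = gaussSum χ ψ := by
    rw [gaussSum]
    have h0 : χ (0 : ZMod ℓ) * ψ 0 = 0 := by
      rw [χ.map_nonunit (by simp [not_isUnit_zero]), zero_mul]
    rw [show (∑ a : ZMod ℓ, χ a * ψ a) = ∑ a ∈ Finset.univ.erase (0 : ZMod ℓ), χ a * ψ a from
      (Finset.sum_erase (f := fun a => χ a * ψ a) Finset.univ h0).symm]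
    refine Finset.sum_bij (fun (u : (ZMod ℓ)ˣ) _ => (u : ZMod ℓ)) ?_ ?_ ?_ ?_
    · intro u _
      exact Finset.mem_erase.mpr ⟨u.ne_zero, Finset.mem_univ _⟩
    · intro u _ v _ h
      exact Units.ext h
    · intro a ha
      have ha0 : a ≠ 0 := (Finset.mem_erase.mp ha).1
      exact ⟨Units.mk0 a ha0, Finset.mem_univ _, rfl⟩
    · intro u _
      rw [AddChar.zmodChar_apply]
  rw [hsum, ← hord, gaussSum_pow_eq_prod_jacobiSum (by omega : 2 ≤ orderOf χ) hψ, hord]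
  refine Subalgebra.mul_mem _ (Subalgebra.mul_mem _ ?_ (Subalgebra.natCast_mem _ _)) ?_
  · exact MulChar.apply_mem_algebraAdjoin_of_pow_eq_one hχn hζn _
  · refine Subalgebra.prod_mem _ fun i _ => ?_
    exact jacobiSum_mem_algebraAdjoin_of_pow_eq_one hχn
      (by rw [← pow_mul, mul_comm, pow_mul, hχn, one_pow]) hζn
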